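/- Let Ω ⊆ ℂ be open and convex, let h, g, η : ℂ → ℂ be complex-differentiable on Ω, let K > 0 satisfy |η(z₂) − η(z₁)| ≥ K|z₂ − z₁| for all z₁, z₂ ∈ Ω, and let k ∈ [0,1) satisfy |h′(z) − η′(z)| + |g′(z)| ≤ kK for all z ∈ Ω. Define f(z) = h(z) + conj(g(z)). Then |f(z₂) − f(z₁)| ≥ (1−k)·K·|z₂ − z₁| for all z₁, z₂ ∈ Ω. -/

import Mathlib

/-- Lower (co-Lipschitz) bound for the harmonic mapping `f = h + conj ∘ g`:
`|f(z₂) - f(z₁)| ≥ (1-k)K|z₂ - z₁|` on the convex domain `Ω`. -/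
theorem harmonic_coLipschitz_bound
    (Ω : Set ℂ) (hΩopen : IsOpen Ω) (hΩconv : Convex ℝ Ω)
    (h g η : ℂ → ℂ)
    (hh : ∀ z ∈ Ω, DifferentiableAt ℂ h z)
    (hg : ∀ z ∈ Ω, DifferentiableAt ℂ g z)
    (hη : ∀ z ∈ Ω, DifferentiableAt ℂ η z)
    (K : ℝ) (hK : 0 < K)
    (hco : ∀ z₁ ∈ Ω, ∀ z₂ ∈ Ω, K * ‖z₂ - z₁‖ ≤ ‖η z₂ - η z₁‖)
    (k : ℝ) (hk0 : 0 ≤ k) (hk1 : k < 1)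
    (hbd : ∀ z ∈ Ω, ‖deriv h z - deriv η z‖ + ‖deriv g z‖ ≤ k * K) :
    ∀ z₁ ∈ Ω, ∀ z₂ ∈ Ω,
      (1 - k) * K * ‖z₂ - z₁‖
        ≤ ‖(h z₂ + (starRingEnd ℂ) (g z₂)) - (h z₁ + (starRingEnd ℂ) (g z₁))‖ := by
  intro z₁ hz₁ z₂ hz₂
  set φ : ℂ → ℂ := fun z => (h z - η z) + (starRingEnd ℂ) (g z) with hφdef
  set L : ℂ → ℂ →L[ℝ] ℂ := fun z =>
    (((1 : ℂ →L[ℂ] ℂ).smulRight (deriv h z - deriv η z)).restrictScalars ℝ) +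
      (Complex.conjCLE.toContinuousLinearMap.comp
        (((1 : ℂ →L[ℂ] ℂ).smulRight (deriv g z)).restrictScalars ℝ)) with hLdef
  have hφderiv : ∀ z ∈ Ω, HasFDerivWithinAt φ (L z) Ω z := by
    intro z hz
    have h1 : HasFDerivAt (fun w => h w - η w)
        ((((1 : ℂ →L[ℂ] ℂ).smulRight (deriv h z - deriv η z)).restrictScalars ℝ)) z := by
      have := (((hh z hz).hasDerivAt).sub ((hη z hz).hasDerivAt)).hasFDerivAt
      exact this.restrictScalars ℝ
    have h2 : HasFDerivAt (fun w => (starRingEnd ℂ) (g w))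
        (Complex.conjCLE.toContinuousLinearMap.comp
          (((1 : ℂ →L[ℂ] ℂ).smulRight (deriv g z)).restrictScalars ℝ)) z := by
      have hg' : HasFDerivAt g (((1 : ℂ →L[ℂ] ℂ).smulRight (deriv g z)).restrictScalars ℝ) z :=
        ((hg z hz).hasDerivAt).hasFDerivAt.restrictScalars ℝ
      exact (Complex.conjCLE.toContinuousLinearMap.hasFDerivAt).comp z hg'
    exact ((h1.add h2).hasFDerivWithinAt)
  have hLbound : ∀ z ∈ Ω, ‖L z‖ ≤ k * K := by
    intro z hz
    refine ContinuousLinearMap.opNorm_le_bound _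
      (le_trans (by positivity) (hbd z hz)) (fun w => ?_)
    have : L z w = (deriv h z - deriv η z) * w + (starRingEnd ℂ) ((deriv g z) * w) := by
      simp [hLdef, Complex.conjCLE_apply, mul_comm]
    rw [this]
    calc ‖(deriv h z - deriv η z) * w + (starRingEnd ℂ) ((deriv g z) * w)‖
        ≤ ‖(deriv h z - deriv η z) * w‖ + ‖(starRingEnd ℂ) ((deriv g z) * w)‖ :=
          norm_add_le _ _
      _ = (‖deriv h z - deriv η z‖ + ‖deriv g z‖) * ‖w‖ := by
          rw [RingHomIsometric.norm_map]; simp [norm_mul]; ring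
      _ ≤ k * K * ‖w‖ := by
          have := hbd z hz
          nlinarith [norm_nonneg w]
  have hmvt : ‖φ z₂ - φ z₁‖ ≤ k * K * ‖z₂ - z₁‖ :=
    hΩconv.norm_image_sub_le_of_norm_hasFDerivWithin_le hφderiv hLbound hz₁ hz₂
  have hηlb := hco z₁ hz₁ z₂ hz₂
  have hkey : η z₂ - η z₁ =
      ((h z₂ + (starRingEnd ℂ) (g z₂)) - (h z₁ + (starRingEnd ℂ) (g z₁))) - (φ z₂ - φ z₁) := by
    simp [hφdef]; ring
  have htri : ‖η z₂ - η z₁‖ ≤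
      ‖(h z₂ + (starRingEnd ℂ) (g z₂)) - (h z₁ + (starRingEnd ℂ) (g z₁))‖ + ‖φ z₂ - φ z₁‖ := by
    rw [hkey]; exact norm_sub_le _ _
  nlinarith [norm_nonneg (z₂ - z₁)]
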